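/- Let α = (a₁ b₃ b₂ b₁), β = (c₁ c₂ b₃ b₂ b₁), and γ = (e₁ c₂ b₃ b₂) be cyclic permutations on the seven distinct symbols a₁, b₁, b₂, b₃, c₁, c₂, e₁. Then the product β α β⁻¹ γ⁻¹ is a 3-cycle. -/
import Mathlib


/-- Extension (a) of the (1,3,2) T₀-pair: with α = (a₁ b₃ b₂ b₁),
β = (c₁ c₂ b₃ b₂ b₁) and γ = (e₁ c₂ b₃ b₂) on seven distinct symbols, the
left-to-right product β α β⁻¹ γ⁻¹ is a 3-cycle.  Left-to-right composition
σ τ : x ↦ τ(σ(x)) corresponds to the Mathlib product τ * σ. -/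
theorem t0_extension_three_cycle {X : Type*} [Fintype X] [DecidableEq X]
    (a b1 b2 b3 c1 c2 e1 : X)
    (hdist : ([a, b1, b2, b3, c1, c2, e1] : List X).Nodup) :
    let α := List.formPerm [a, b3, b2, b1]
    let β := List.formPerm [c1, c2, b3, b2, b1]
    let γ := List.formPerm [e1, c2, b3, b2]
    Equiv.Perm.IsThreeCycle (γ⁻¹ * β⁻¹ * α * β) := by
  intro α β γ
  simp only [List.nodup_cons, List.mem_cons, List.mem_singleton, List.not_mem_nil,
    or_false, not_or, List.nodup_nil, and_true] at hdist
  obtain ⟨⟨h1,h2,h3,h4,h5,h6⟩,⟨h7,h8,h9,h10,h11⟩,⟨h12,h13,h14,h15⟩,⟨h16,h17,h18⟩,⟨h19,h20⟩,h21,-⟩ := hdist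
  have hβ : β⁻¹ = List.formPerm [b1, b2, b3, c2, c1] := by
    rw [show [b1,b2,b3,c2,c1] = [c1,c2,b3,b2,b1].reverse from rfl, List.formPerm_reverse]
  have hγ : γ⁻¹ = List.formPerm [b2, b3, c2, e1] := by
    rw [show [b2,b3,c2,e1] = [e1,c2,b3,b2].reverse from rfl, List.formPerm_reverse]
  have key : γ⁻¹ * β⁻¹ * α * β = List.formPerm [a, e1, b2] := by
    ext x
    simp only [hβ, hγ, α, β, Equiv.Perm.mul_apply]
    rcases eq_or_ne x a with rfl | hxa <;>
    [skip; rcases eq_or_ne x b1 with rfl | hxb1] <;>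
    [skip; skip; rcases eq_or_ne x b2 with rfl | hxb2] <;>
    [skip; skip; skip; rcases eq_or_ne x b3 with rfl | hxb3] <;>
    [skip; skip; skip; skip; rcases eq_or_ne x c1 with rfl | hxc1] <;>
    [skip; skip; skip; skip; skip; rcases eq_or_ne x c2 with rfl | hxc2] <;>
    [skip; skip; skip; skip; skip; skip; rcases eq_or_ne x e1 with rfl | hxe1] <;>
    simp_all [List.formPerm_cons_cons, List.formPerm_singleton, Equiv.Perm.mul_apply,
      Equiv.swap_apply_of_ne_of_ne, Equiv.swap_apply_left, Equiv.swap_apply_right,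
      Ne.symm h1, Ne.symm h2, Ne.symm h3, Ne.symm h4, Ne.symm h5, Ne.symm h6, Ne.symm h7, Ne.symm h8, Ne.symm h9, Ne.symm h10, Ne.symm h11, Ne.symm h12, Ne.symm h13, Ne.symm h14, Ne.symm h15, Ne.symm h16, Ne.symm h17, Ne.symm h18, Ne.symm h19, Ne.symm h20, Ne.symm h21]
  rw [key, ← card_support_eq_three_iff,
    List.support_formPerm_of_nodup _ (by simp [h2, h6, Ne.symm h15]) (by simp)]
  simp [List.toFinset_card_of_nodup, h2, h6, Ne.symm h15]
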